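/- Let l ≥ 2 be an integer and let p_1,…,p_l ∈ (0,1) with Σ_{j=1}^l p_j = 1 and q_1,…,q_l ∈ (0,1) with Σ_{j=1}^l q_j = 1. For each integer n ≥ 1 let P_n = Σ over tuples (m_1,…,m_l) of nonnegative integers with m_1 + ⋯ + m_l = n and |m_j − n·q_j| ≤ 0.01·√n for every j, of (n!/(m_1!⋯m_l!))·∏_{j=1}^l p_j^{m_j}. Then (1/n)·ln P_n converges to Σ_{j=1}^l q_j·ln(p_j/q_j) as n → ∞. -/

import Mathlib

open Real Filter Finset

/-- Stirling-type bounds on `log n!`. -/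
lemma logFact_bounds (n : ℕ) (hn : 1 ≤ n) :
    (n : ℝ) * Real.log n - n ≤ Real.log (n.factorial : ℝ) ∧
      Real.log (n.factorial : ℝ) ≤ (n : ℝ) * Real.log n - n + (2 + Real.log n) := by
  obtain ⟨k, rfl⟩ : ∃ k, n = k + 1 := ⟨n - 1, by omega⟩
  have hform := Stirling.log_stirlingSeq_formula (k + 1)
  have hanti := Stirling.stirlingSeq'_antitone
  have hlim : Tendsto (Stirling.stirlingSeq ∘ Nat.succ) atTop (nhds (Real.sqrt π)) :=
    Stirling.tendsto_stirlingSeq_sqrt_pi.comp (tendsto_add_atTop_nat 1)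
  have h1 : Real.sqrt π ≤ Stirling.stirlingSeq (k + 1) := hanti.le_of_tendsto hlim k
  have h2 : Stirling.stirlingSeq (k + 1) ≤ Stirling.stirlingSeq 1 := hanti (Nat.zero_le k)
  have hπ : (1 : ℝ) ≤ Real.sqrt π := by
    rw [show (1 : ℝ) = Real.sqrt 1 by simp]
    exact Real.sqrt_le_sqrt (by nlinarith [Real.pi_gt_three])
  have hspos : 0 < Stirling.stirlingSeq (k + 1) := Stirling.stirlingSeq'_pos k
  have hlogA0 : 0 ≤ Real.log (Stirling.stirlingSeq (k + 1)) := Real.log_nonneg (hπ.trans h1)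
  have hlogA1 : Real.log (Stirling.stirlingSeq (k + 1)) ≤ 1 := by
    have hsq2 : (1 : ℝ) ≤ Real.sqrt 2 := by
      rw [show (1 : ℝ) = Real.sqrt 1 by simp]
      exact Real.sqrt_le_sqrt one_le_two
    have hle : Stirling.stirlingSeq (k + 1) ≤ Real.exp 1 := by
      refine h2.trans ?_
      rw [Stirling.stirlingSeq_one]
      exact div_le_self (Real.exp_pos 1).le hsq2
    calc Real.log (Stirling.stirlingSeq (k + 1)) ≤ Real.log (Real.exp 1) :=
          Real.log_le_log hspos hle
      _ = 1 := Real.log_exp 1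
  have hN1 : (1 : ℝ) ≤ ((k + 1 : ℕ) : ℝ) := by exact_mod_cast Nat.one_le_iff_ne_zero.2 (by omega)
  have hNpos : (0 : ℝ) < ((k + 1 : ℕ) : ℝ) := by positivity
  have hlogdiv : Real.log (((k + 1 : ℕ) : ℝ) / Real.exp 1) = Real.log ((k + 1 : ℕ) : ℝ) - 1 := by
    rw [Real.log_div hNpos.ne' (Real.exp_ne_zero 1), Real.log_exp]
  have h2N : Real.log (2 * ((k + 1 : ℕ) : ℝ)) = Real.log 2 + Real.log ((k + 1 : ℕ) : ℝ) :=
    Real.log_mul two_ne_zero hNpos.ne'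
  have hlog2a : (0 : ℝ) ≤ Real.log 2 := Real.log_nonneg one_le_two
  have hlog2b : Real.log 2 ≤ 1 := by
    have h2e : (2 : ℝ) ≤ Real.exp 1 := by nlinarith [Real.exp_one_gt_d9]
    calc Real.log 2 ≤ Real.log (Real.exp 1) := Real.log_le_log two_pos h2e
      _ = 1 := Real.log_exp 1
  have hlogN : 0 ≤ Real.log ((k + 1 : ℕ) : ℝ) := Real.log_nonneg hN1
  rw [hlogdiv, h2N] at hform
  constructor <;> nlinarith [hform]

/-- Lipschitz-type estimate for `x ↦ x log x`. -/
lemma abs_xlogx_sub (y x : ℝ) (hy : 0 < y) (hx : 0 < x) (hx1 : x ≤ 1) (hxy : y / 2 ≤ x) :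
    |x * Real.log x - y * Real.log y| ≤ |x - y| * (2 / y + |Real.log y|) := by
  have hlxy : |Real.log x - Real.log y| ≤ |x - y| * (2 / y) := by
    rcases le_total y x with h | h
    · have h0 := Real.log_le_sub_one_of_pos (div_pos hx hy)
      rw [Real.log_div hx.ne' hy.ne'] at h0
      rw [abs_of_nonneg (sub_nonneg.2 (Real.log_le_log hy h)), abs_of_nonneg (sub_nonneg.2 h)]
      have e1 : x / y - 1 = (x - y) / y := by field_simp
      have e2 : (x - y) * (2 / y) = 2 * ((x - y) / y) := by ring
      have e3 : 0 ≤ (x - y) / y := div_nonneg (sub_nonneg.2 h) hy.le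
      rw [e1] at h0
      linarith
    · have h0 := Real.log_le_sub_one_of_pos (div_pos hy hx)
      rw [Real.log_div hy.ne' hx.ne'] at h0
      rw [abs_sub_comm, abs_of_nonneg (sub_nonneg.2 (Real.log_le_log hx h)),
        abs_sub_comm x y, abs_of_nonneg (sub_nonneg.2 h)]
      have e1 : y / x - 1 = (y - x) / x := by field_simp
      have e2 : (y - x) / x ≤ (y - x) * (2 / y) := by
        have h1x : 1 / x ≤ 2 / y := by rw [div_le_div_iff₀ hx hy]; linarith
        have e : (y - x) / x = (y - x) * (1 / x) := by ring
        rw [e]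
        exact mul_le_mul_of_nonneg_left h1x (sub_nonneg.2 h)
      rw [e1] at h0
      linarith
  have hid : x * Real.log x - y * Real.log y
      = x * (Real.log x - Real.log y) + (x - y) * Real.log y := by ring
  rw [hid]
  refine (abs_add_le _ _).trans ?_
  rw [abs_mul, abs_mul, abs_of_pos hx]
  have h1 : x * |Real.log x - Real.log y| ≤ |x - y| * (2 / y) := by
    calc x * |Real.log x - Real.log y| ≤ 1 * |Real.log x - Real.log y| :=
          mul_le_mul_of_nonneg_right hx1 (abs_nonneg _)
      _ = |Real.log x - Real.log y| := one_mul _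
      _ ≤ |x - y| * (2 / y) := hlxy
  nlinarith [abs_nonneg (x - y), abs_nonneg (Real.log y)]

/-- Log of a multinomial term is close to its "entropy" value. -/
lemma term_log_est {l : ℕ} (p : Fin l → ℝ) (hp : ∀ j, 0 < p j)
    (n : ℕ) (hn : 1 ≤ n) (m : Fin l → ℕ) (hm1 : ∀ j, 1 ≤ m j) (hsum : ∑ j, m j = n) :
    |Real.log (((n.factorial : ℝ) / ∏ j, ((m j).factorial : ℝ)) * ∏ j, p j ^ m j)
        - ∑ j, ((m j : ℝ) * Real.log (p j) - (m j : ℝ) * Real.log ((m j : ℝ) / n))|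
      ≤ ((l : ℝ) + 1) * (2 + Real.log n) := by
  have hn0 : (0 : ℝ) < n := by exact_mod_cast hn
  have hmj0 : ∀ j, (0 : ℝ) < (m j : ℝ) := fun j => by exact_mod_cast hm1 j
  have hfacpos : (0 : ℝ) < ∏ j, ((m j).factorial : ℝ) :=
    Finset.prod_pos fun j _ => by exact_mod_cast (m j).factorial_pos
  have hppos : (0 : ℝ) < ∏ j, p j ^ m j := Finset.prod_pos fun j _ => pow_pos (hp j) _
  have hnfac : (0 : ℝ) < (n.factorial : ℝ) := by exact_mod_cast n.factorial_pos
  have hlog : Real.log (((n.factorial : ℝ) / ∏ j, ((m j).factorial : ℝ)) * ∏ j, p j ^ m j)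
      = Real.log (n.factorial : ℝ) - ∑ j, Real.log ((m j).factorial : ℝ)
        + ∑ j, (m j : ℝ) * Real.log (p j) := by
    rw [Real.log_mul (by positivity) hppos.ne', Real.log_div hnfac.ne' hfacpos.ne',
      Real.log_prod (fun j _ => (by exact_mod_cast (m j).factorial_pos : (0:ℝ) < _).ne'),
      Real.log_prod (fun j _ => (pow_pos (hp j) _).ne')]
    simp only [Real.log_pow]
  have hcast : ∑ j, (m j : ℝ) = (n : ℝ) := by exact_mod_cast hsum
  have hRs : ∑ j, ((m j : ℝ) * Real.log (p j) - (m j : ℝ) * Real.log ((m j : ℝ) / n))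
      = ∑ j, (m j : ℝ) * Real.log (p j)
        - (∑ j, (m j : ℝ) * Real.log (m j) - (n : ℝ) * Real.log n) := by
    rw [Finset.sum_sub_distrib]
    have h2 : ∑ j, (m j : ℝ) * Real.log ((m j : ℝ) / n)
        = ∑ j, ((m j : ℝ) * Real.log (m j) - (m j : ℝ) * Real.log n) :=
      Finset.sum_congr rfl fun j _ => by
        rw [Real.log_div (hmj0 j).ne' hn0.ne']; ring
    rw [h2, Finset.sum_sub_distrib, ← Finset.sum_mul, hcast]
  obtain ⟨hA, hB⟩ := logFact_bounds n hn
  have hlogn0 : 0 ≤ Real.log n := Real.log_nonneg (by exact_mod_cast hn)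
  have hEj : ∀ j, ((m j : ℝ) * Real.log (m j) - (m j : ℝ) ≤ Real.log ((m j).factorial : ℝ))
      ∧ Real.log ((m j).factorial : ℝ)
        ≤ (m j : ℝ) * Real.log (m j) - (m j : ℝ) + (2 + Real.log n) := by
    intro j
    obtain ⟨a, b⟩ := logFact_bounds (m j) (hm1 j)
    have hle : m j ≤ n := hsum ▸ Finset.single_le_sum (f := m)
      (fun i _ => Nat.zero_le _) (Finset.mem_univ j)
    have hml : Real.log (m j : ℝ) ≤ Real.log n :=
      Real.log_le_log (hmj0 j) (by exact_mod_cast hle)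
    exact ⟨a, b.trans (by linarith)⟩
  have hSup : ∑ j, Real.log ((m j).factorial : ℝ)
      ≤ ∑ j, ((m j : ℝ) * Real.log (m j) - (m j : ℝ)) + (l : ℝ) * (2 + Real.log n) := by
    calc ∑ j, Real.log ((m j).factorial : ℝ)
        ≤ ∑ j, ((m j : ℝ) * Real.log (m j) - (m j : ℝ) + (2 + Real.log n)) :=
          Finset.sum_le_sum fun j _ => (hEj j).2
      _ = _ := by
          rw [Finset.sum_add_distrib, Finset.sum_const, Finset.card_univ, Fintype.card_fin,
            nsmul_eq_mul]
  have hSlo : ∑ j, ((m j : ℝ) * Real.log (m j) - (m j : ℝ))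
      ≤ ∑ j, Real.log ((m j).factorial : ℝ) := Finset.sum_le_sum fun j _ => (hEj j).1
  have hms : ∑ j, ((m j : ℝ) * Real.log (m j) - (m j : ℝ))
      = ∑ j, (m j : ℝ) * Real.log (m j) - (n : ℝ) := by
    rw [Finset.sum_sub_distrib, hcast]
  have hl0 : (0 : ℝ) ≤ (l : ℝ) * (2 + Real.log n) :=
    mul_nonneg (Nat.cast_nonneg l) (by linarith)
  rw [hlog, hRs, abs_le]
  constructor <;> linarith

/-- Existence of a lattice point close to `n • q`. -/
lemma exists_good (l : ℕ) (hl : 1 ≤ l) (q : Fin l → ℝ) (hq : ∀ j, 0 < q j)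
    (hq1 : ∀ j, q j ≤ 1) (hqs : ∑ j, q j = 1) (n : ℕ) (hn : (l : ℝ) ≤ 0.01 * Real.sqrt n) :
    ∃ m : Fin l → ℕ, (∀ j, m j ≤ n) ∧ (∑ j, m j) = n ∧
      ∀ j, |(m j : ℝ) - n * q j| ≤ 0.01 * Real.sqrt n := by
  obtain ⟨k, rfl⟩ : ∃ k, l = k + 1 := ⟨l - 1, by omega⟩
  have hk1 : (1 : ℝ) ≤ ((k + 1 : ℕ) : ℝ) := by exact_mod_cast Nat.one_le_iff_ne_zero.2 (by omega)
  set T : ℕ := ∑ i : Fin k, ⌊(n : ℝ) * q i.castSucc⌋₊ with hT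
  have hqlast : ∑ i : Fin k, q i.castSucc = 1 - q (Fin.last k) := by
    have h := Fin.sum_univ_castSucc (f := q)
    rw [hqs] at h
    linarith
  have hfl : ∀ i : Fin k, ((⌊(n : ℝ) * q i.castSucc⌋₊ : ℝ) ≤ (n : ℝ) * q i.castSucc
      ∧ (n : ℝ) * q i.castSucc < ⌊(n : ℝ) * q i.castSucc⌋₊ + 1) := fun i =>
    ⟨Nat.floor_le (mul_nonneg (Nat.cast_nonneg n) (hq _).le), Nat.lt_floor_add_one _⟩
  have hTreal : (T : ℝ) = ∑ i : Fin k, (⌊(n : ℝ) * q i.castSucc⌋₊ : ℝ) := by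
    rw [hT]; push_cast; rfl
  have hTle : (T : ℝ) ≤ (n : ℝ) * (1 - q (Fin.last k)) := by
    rw [hTreal]
    calc ∑ i : Fin k, (⌊(n : ℝ) * q i.castSucc⌋₊ : ℝ) ≤ ∑ i : Fin k, (n : ℝ) * q i.castSucc :=
          Finset.sum_le_sum fun i _ => (hfl i).1
      _ = (n : ℝ) * (1 - q (Fin.last k)) := by rw [← Finset.mul_sum, hqlast]
  have hTn : T ≤ n := by
    have h : (T : ℝ) ≤ (n : ℝ) := hTle.trans (by nlinarith [hq (Fin.last k), (Nat.cast_nonneg n : (0:ℝ) ≤ n)])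
    exact_mod_cast h
  refine ⟨fun j => if j = Fin.last k then n - T else ⌊(n : ℝ) * q j⌋₊, ?_, ?_, ?_⟩
  · intro j
    dsimp only
    by_cases hj : j = Fin.last k
    · rw [if_pos hj]; omega
    · rw [if_neg hj]
      have h : (n : ℝ) * q j ≤ (n : ℝ) := by nlinarith [hq1 j, hq j, (Nat.cast_nonneg n : (0:ℝ) ≤ n)]
      calc ⌊(n : ℝ) * q j⌋₊ ≤ ⌊(n : ℝ)⌋₊ := Nat.floor_mono h
        _ = n := Nat.floor_natCast n
  · dsimp only
    rw [Fin.sum_univ_castSucc]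
    have hrw : ∀ i : Fin k,
        (if i.castSucc = Fin.last k then n - T else ⌊(n : ℝ) * q i.castSucc⌋₊)
          = ⌊(n : ℝ) * q i.castSucc⌋₊ := fun i => if_neg (Fin.castSucc_lt_last i).ne
    rw [Finset.sum_congr rfl fun i _ => hrw i, if_pos rfl, ← hT]
    omega
  · intro j
    dsimp only
    by_cases hj : j = Fin.last k
    · subst hj
      rw [if_pos rfl]
      have hsub : ((n - T : ℕ) : ℝ) = (n : ℝ) - (T : ℝ) := by
        rw [Nat.cast_sub hTn]
      rw [hsub]
      have key : (n : ℝ) - (T : ℝ) - (n : ℝ) * q (Fin.last k)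
          = ∑ i : Fin k, ((n : ℝ) * q i.castSucc - (⌊(n : ℝ) * q i.castSucc⌋₊ : ℝ)) := by
        rw [Finset.sum_sub_distrib, ← hTreal, ← Finset.mul_sum, hqlast]
        ring
      rw [key]
      calc |∑ i : Fin k, ((n : ℝ) * q i.castSucc - (⌊(n : ℝ) * q i.castSucc⌋₊ : ℝ))|
          ≤ ∑ i : Fin k, |(n : ℝ) * q i.castSucc - (⌊(n : ℝ) * q i.castSucc⌋₊ : ℝ)| :=
            Finset.abs_sum_le_sum_abs _ _
        _ ≤ ∑ _i : Fin k, (1 : ℝ) := Finset.sum_le_sum (fun i _ => by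
              rw [abs_of_nonneg (sub_nonneg.2 (hfl i).1)]
              linarith [(hfl i).2])
        _ = (k : ℝ) := by simp
        _ ≤ 0.01 * Real.sqrt n := by
              have hk : (k : ℝ) ≤ ((k + 1 : ℕ) : ℝ) := by push_cast; linarith
              linarith
    · rw [if_neg hj]
      have ha : ((⌊(n : ℝ) * q j⌋₊ : ℝ)) ≤ (n : ℝ) * q j :=
        Nat.floor_le (mul_nonneg (Nat.cast_nonneg n) (hq j).le)
      have hb : (n : ℝ) * q j < ⌊(n : ℝ) * q j⌋₊ + 1 := Nat.lt_floor_add_one _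
      rw [abs_le]
      constructor <;> nlinarith

open Classical in
/-- `P_n`: the probability that a multinomial random vector with parameters `(n; p)` has every
component within `0.01 √n` of `n q_j`, written out as a finite sum of multinomial
probabilities. -/
noncomputable def Pmult (l : ℕ) (p q : Fin l → ℝ) (n : ℕ) : ℝ :=
  ∑ m ∈ Fintype.piFinset fun _ : Fin l => Finset.range (n + 1),
    if (∑ j, m j) = n ∧ ∀ j, |(m j : ℝ) - n * q j| ≤ 0.01 * Real.sqrt n then
      ((n.factorial : ℝ) / ∏ j, ((m j).factorial : ℝ)) * ∏ j, p j ^ m j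
    else 0

set_option maxHeartbeats 2000000 in
/-- The large deviation rate of the multinomial distribution:
`(1/n) ln P_n → Σ_j q_j ln (p_j / q_j)`. -/
theorem stmt_12 (l : ℕ) (hl : 2 ≤ l) (p q : Fin l → ℝ)
    (hp : ∀ j, p j ∈ Set.Ioo (0 : ℝ) 1) (hps : ∑ j, p j = 1)
    (hq : ∀ j, q j ∈ Set.Ioo (0 : ℝ) 1) (hqs : ∑ j, q j = 1) :
    Filter.Tendsto (fun n : ℕ => (1 / n : ℝ) * Real.log (Pmult l p q n)) Filter.atTop
      (nhds (∑ j, q j * Real.log (p j / q j))) := by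
  classical
  have hq0 : ∀ j, 0 < q j := fun j => (hq j).1
  have hp0 : ∀ j, 0 < p j := fun j => (hp j).1
  have hq1 : ∀ j, q j ≤ 1 := fun j => (hq j).2.le
  obtain ⟨S, hSdef⟩ : ∃ S : ℝ, S = ∑ j, q j * Real.log (p j / q j) := ⟨_, rfl⟩
  obtain ⟨K, hKdef⟩ : ∃ K : ℝ, K = ∑ j, (|Real.log (p j)| + 2 / q j + |Real.log (q j)|) :=
    ⟨_, rfl⟩
  have hK0 : 0 ≤ K := hKdef ▸ Finset.sum_nonneg fun j _ =>
    add_nonneg (add_nonneg (abs_nonneg _) (div_nonneg two_pos.le (hq0 j).le)) (abs_nonneg _)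
  obtain ⟨e1, he1⟩ : ∃ e1 : ℕ → ℝ,
      e1 = fun n : ℕ => ((l : ℝ) + 1) * (2 + Real.log n) + 0.01 * Real.sqrt n * K := ⟨_, rfl⟩
  obtain ⟨g, hg⟩ : ∃ g : ℕ → ℝ,
      g = fun n : ℕ => ((l : ℝ) * (Real.log 2 + Real.log n) + e1 n) / n := ⟨_, rfl⟩
  rw [← hSdef, ← tendsto_sub_nhds_zero_iff]
  have hsqR : Tendsto Real.sqrt atTop atTop :=
    (tendsto_rpow_atTop (by norm_num : (0:ℝ) < 1/2)).congr
      (fun x => (Real.sqrt_eq_rpow x).symm)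
  have hsqN : Tendsto (fun n : ℕ => Real.sqrt n) atTop atTop :=
    hsqR.comp tendsto_natCast_atTop_atTop
  have hev1 : ∀ᶠ n : ℕ in atTop, (l : ℝ) ≤ 0.01 * Real.sqrt n := by
    filter_upwards [hsqN.eventually_ge_atTop ((l : ℝ) * 100)] with n hn
    nlinarith
  have hev2 : ∀ᶠ n : ℕ in atTop, ∀ j, 0.01 * Real.sqrt n + 1 ≤ (n : ℝ) * q j / 2 := by
    refine eventually_all.2 fun j => ?_
    have hc := hq0 j
    filter_upwards [hsqN.eventually_ge_atTop (max 1 (4 / q j))] with n h1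
    have hs1 : (1 : ℝ) ≤ Real.sqrt n := le_trans (le_max_left _ _) h1
    have hs2 : 4 / q j ≤ Real.sqrt n := le_trans (le_max_right _ _) h1
    have h4 : (4 : ℝ) ≤ Real.sqrt n * q j := by
      rw [div_le_iff₀ hc] at hs2; linarith
    have hsq : Real.sqrt n * Real.sqrt n = (n : ℝ) := Real.mul_self_sqrt (Nat.cast_nonneg n)
    nlinarith [hsq, h4, hs1, hc, mul_le_mul_of_nonneg_left h4 (Real.sqrt_nonneg (n : ℝ))]
  refine squeeze_zero_norm' (a := g) ?_ ?_
  · -- eventual bound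
    filter_upwards [hev1, hev2, eventually_ge_atTop 1] with n hn1 hn2 hn3
    have hn0 : (0 : ℝ) < n := by exact_mod_cast hn3
    have hs0 : 0 ≤ Real.sqrt (n : ℝ) := Real.sqrt_nonneg _
    have hlogn0 : 0 ≤ Real.log n := Real.log_nonneg (by exact_mod_cast hn3)
    have hln0 : (0 : ℝ) ≤ (l : ℝ) := Nat.cast_nonneg l
    have he1nn : 0 ≤ e1 n := by
      simp only [he1]
      have h := mul_nonneg (by linarith : (0:ℝ) ≤ (l : ℝ) + 1)
        (by linarith : (0:ℝ) ≤ 2 + Real.log n)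
      have h' : 0 ≤ 0.01 * Real.sqrt n * K := mul_nonneg (by positivity) hK0
      linarith
    have hterm : ∀ m : Fin l → ℕ, (∑ j, m j) = n →
        (∀ j, |(m j : ℝ) - n * q j| ≤ 0.01 * Real.sqrt n) →
        |Real.log (((n.factorial : ℝ) / ∏ j, ((m j).factorial : ℝ)) * ∏ j, p j ^ m j)
          - (n : ℝ) * S| ≤ e1 n := by
      intro m hsum hclose
      have hm1 : ∀ j, 1 ≤ m j := by
        intro j
        have h2 := hn2 j
        have h3 := (abs_le.1 (hclose j)).1
        have h : (1 : ℝ) ≤ (m j : ℝ) := by linarith [hs0]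
        exact_mod_cast h
      have hmle : ∀ j, m j ≤ n := fun j => hsum ▸ Finset.single_le_sum (f := m)
        (fun i _ => Nat.zero_le _) (Finset.mem_univ j)
      have hR : |(∑ j, ((m j : ℝ) * Real.log (p j) - (m j : ℝ) * Real.log ((m j : ℝ) / n)))
          - (n : ℝ) * S| ≤ 0.01 * Real.sqrt n * K := by
        have hnS : (n : ℝ) * S = ∑ j, (n : ℝ) * (q j * Real.log (p j / q j)) := by
          rw [hSdef, Finset.mul_sum]
        rw [hnS, ← Finset.sum_sub_distrib]
        refine (Finset.abs_sum_le_sum_abs _ _).trans ?_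
        rw [hKdef, Finset.mul_sum]
        refine Finset.sum_le_sum fun j _ => ?_
        have hmj0 : (0 : ℝ) < (m j : ℝ) := by exact_mod_cast hm1 j
        set x : ℝ := (m j : ℝ) / n with hxdef
        have hxpos : 0 < x := div_pos hmj0 hn0
        have hx1 : x ≤ 1 := by
          rw [hxdef, div_le_one hn0]; exact_mod_cast hmle j
        have hxy : q j / 2 ≤ x := by
          rw [hxdef, le_div_iff₀ hn0]
          have h3 := (abs_le.1 (hclose j)).1
          have h2 := hn2 j
          linarith
        have hxl := abs_xlogx_sub (q j) x (hq0 j) hxpos hx1 hxy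
        have hmx : (m j : ℝ) = (n : ℝ) * x := by
          rw [hxdef]; field_simp
        have hxq : |x - q j| * (n : ℝ) = |(m j : ℝ) - (n : ℝ) * q j| := by
          rw [← abs_of_pos hn0, ← abs_mul]
          congr 1
          rw [hxdef]
          field_simp
          rw [abs_of_pos hn0]; ring
        rw [Real.log_div (hp0 j).ne' (hq0 j).ne']
        have expand : (m j : ℝ) * Real.log (p j) - (m j : ℝ) * Real.log ((m j : ℝ) / n)
            - (n : ℝ) * (q j * (Real.log (p j) - Real.log (q j)))
            = ((m j : ℝ) - (n : ℝ) * q j) * Real.log (p j)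
              - (n : ℝ) * (x * Real.log x - q j * Real.log (q j)) := by
          rw [← hxdef, hmx]; ring
        rw [expand]
        have tri : |((m j : ℝ) - (n : ℝ) * q j) * Real.log (p j)
            - (n : ℝ) * (x * Real.log x - q j * Real.log (q j))|
            ≤ |((m j : ℝ) - (n : ℝ) * q j) * Real.log (p j)|
              + |(n : ℝ) * (x * Real.log x - q j * Real.log (q j))| := abs_sub _ _
        refine tri.trans ?_
        rw [abs_mul, abs_mul, abs_of_pos hn0]
        have hA : |(m j : ℝ) - (n : ℝ) * q j| * |Real.log (p j)|
            ≤ 0.01 * Real.sqrt n * |Real.log (p j)| :=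
          mul_le_mul_of_nonneg_right (hclose j) (abs_nonneg _)
        have hB : (n : ℝ) * |x * Real.log x - q j * Real.log (q j)|
            ≤ 0.01 * Real.sqrt n * (2 / q j + |Real.log (q j)|) := by
          calc (n : ℝ) * |x * Real.log x - q j * Real.log (q j)|
              ≤ (n : ℝ) * (|x - q j| * (2 / q j + |Real.log (q j)|)) :=
                mul_le_mul_of_nonneg_left hxl hn0.le
            _ = (|x - q j| * (n : ℝ)) * (2 / q j + |Real.log (q j)|) := by ring
            _ = |(m j : ℝ) - (n : ℝ) * q j| * (2 / q j + |Real.log (q j)|) := by rw [hxq]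
            _ ≤ 0.01 * Real.sqrt n * (2 / q j + |Real.log (q j)|) := by
                refine mul_le_mul_of_nonneg_right (hclose j) ?_
                have := hq0 j
                positivity
        calc |(m j : ℝ) - (n : ℝ) * q j| * |Real.log (p j)|
              + (n : ℝ) * |x * Real.log x - q j * Real.log (q j)|
            ≤ 0.01 * Real.sqrt n * |Real.log (p j)|
              + 0.01 * Real.sqrt n * (2 / q j + |Real.log (q j)|) := by linarith
          _ = 0.01 * Real.sqrt n * (|Real.log (p j)| + 2 / q j + |Real.log (q j)|) := by ring
      have ht := term_log_est p hp0 n hn3 m hm1 hsum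
      have habc := abs_sub_le
        (Real.log (((n.factorial : ℝ) / ∏ j, ((m j).factorial : ℝ)) * ∏ j, p j ^ m j))
        (∑ j, ((m j : ℝ) * Real.log (p j) - (m j : ℝ) * Real.log ((m j : ℝ) / n)))
        ((n : ℝ) * S)
      simp only [he1]
      linarith
    have hPdef : Pmult l p q n
        = ∑ m ∈ Fintype.piFinset fun _ : Fin l => Finset.range (n + 1),
          (if (∑ j, m j) = n ∧ ∀ j, |(m j : ℝ) - n * q j| ≤ 0.01 * Real.sqrt n then
            ((n.factorial : ℝ) / ∏ j, ((m j).factorial : ℝ)) * ∏ j, p j ^ m j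
          else 0) := rfl
    have hnonneg : ∀ m : Fin l → ℕ,
        0 ≤ (if (∑ j, m j) = n ∧ ∀ j, |(m j : ℝ) - n * q j| ≤ 0.01 * Real.sqrt n then
          ((n.factorial : ℝ) / ∏ j, ((m j).factorial : ℝ)) * ∏ j, p j ^ m j
        else 0) := by
      intro m
      split_ifs with hc
      · have h1 : (0 : ℝ) < ∏ j, ((m j).factorial : ℝ) :=
          Finset.prod_pos fun j _ => by exact_mod_cast (m j).factorial_pos
        have h2 : (0 : ℝ) < ∏ j, p j ^ m j := Finset.prod_pos fun j _ => pow_pos (hp0 j) _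
        have h3 : (0 : ℝ) < (n.factorial : ℝ) := by exact_mod_cast n.factorial_pos
        positivity
      · exact le_refl (0 : ℝ)
    have hup : Pmult l p q n ≤ ((n : ℝ) + 1) ^ l * Real.exp ((n : ℝ) * S + e1 n) := by
      rw [hPdef]
      refine le_trans (Finset.sum_le_card_nsmul _ _ (Real.exp ((n : ℝ) * S + e1 n)) ?_) ?_
      · intro m _
        split_ifs with hc
        · have h1 : (0 : ℝ) < ∏ j, ((m j).factorial : ℝ) :=
            Finset.prod_pos fun j _ => by exact_mod_cast (m j).factorial_pos
          have h2 : (0 : ℝ) < ∏ j, p j ^ m j := Finset.prod_pos fun j _ => pow_pos (hp0 j) _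
          have h3 : (0 : ℝ) < (n.factorial : ℝ) := by exact_mod_cast n.factorial_pos
          have hpos : (0 : ℝ) < ((n.factorial : ℝ) / ∏ j, ((m j).factorial : ℝ))
              * ∏ j, p j ^ m j := by positivity
          have hest := hterm m hc.1 hc.2
          calc ((n.factorial : ℝ) / ∏ j, ((m j).factorial : ℝ)) * ∏ j, p j ^ m j
              = Real.exp (Real.log (((n.factorial : ℝ) / ∏ j, ((m j).factorial : ℝ))
                  * ∏ j, p j ^ m j)) := (Real.exp_log hpos).symm
            _ ≤ Real.exp ((n : ℝ) * S + e1 n) :=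
                Real.exp_le_exp.2 (by linarith [(abs_le.1 hest).2])
        · exact (Real.exp_pos _).le
      · rw [Fintype.card_piFinset_const, Finset.card_range, nsmul_eq_mul]
        push_cast
        exact le_rfl
    obtain ⟨mstar, hmle, hmsum, hmclose⟩ := exists_good l (by omega) q hq0 hq1 hqs n hn1
    have hlo : Real.exp ((n : ℝ) * S - e1 n) ≤ Pmult l p q n := by
      have hest := hterm mstar hmsum hmclose
      have h1' : (0 : ℝ) < ∏ j, ((mstar j).factorial : ℝ) :=
        Finset.prod_pos fun j _ => by exact_mod_cast (mstar j).factorial_pos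
      have h2' : (0 : ℝ) < ∏ j, p j ^ mstar j := Finset.prod_pos fun j _ => pow_pos (hp0 j) _
      have h3' : (0 : ℝ) < (n.factorial : ℝ) := by exact_mod_cast n.factorial_pos
      have hpos : (0 : ℝ) < ((n.factorial : ℝ) / ∏ j, ((mstar j).factorial : ℝ))
          * ∏ j, p j ^ mstar j := by positivity
      have h1 : Real.exp ((n : ℝ) * S - e1 n)
          ≤ ((n.factorial : ℝ) / ∏ j, ((mstar j).factorial : ℝ)) * ∏ j, p j ^ mstar j := by
        rw [← Real.exp_log hpos]
        exact Real.exp_le_exp.2 (by linarith [(abs_le.1 hest).1])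
      refine h1.trans ?_
      have hmem : mstar ∈ Fintype.piFinset fun _ : Fin l => Finset.range (n + 1) := by
        rw [Fintype.mem_piFinset]
        intro j
        rw [Finset.mem_range]
        exact Nat.lt_succ_of_le (hmle j)
      calc ((n.factorial : ℝ) / ∏ j, ((mstar j).factorial : ℝ)) * ∏ j, p j ^ mstar j
          = (if (∑ j, mstar j) = n ∧ ∀ j, |(mstar j : ℝ) - n * q j| ≤ 0.01 * Real.sqrt n then
              ((n.factorial : ℝ) / ∏ j, ((mstar j).factorial : ℝ)) * ∏ j, p j ^ mstar j
            else 0) := (if_pos ⟨hmsum, hmclose⟩).symm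
        _ ≤ Pmult l p q n := by
            rw [hPdef]
            exact Finset.single_le_sum (fun m _ => hnonneg m) hmem
    have hPpos : 0 < Pmult l p q n := lt_of_lt_of_le (Real.exp_pos _) hlo
    have hlog_lo : (n : ℝ) * S - e1 n ≤ Real.log (Pmult l p q n) := by
      rw [← Real.log_exp ((n : ℝ) * S - e1 n)]
      exact Real.log_le_log (Real.exp_pos _) hlo
    have hlog_up : Real.log (Pmult l p q n)
        ≤ (l : ℝ) * Real.log ((n : ℝ) + 1) + ((n : ℝ) * S + e1 n) := by
      refine (Real.log_le_log hPpos hup).trans ?_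
      rw [Real.log_mul (by positivity) (Real.exp_ne_zero _), Real.log_pow, Real.log_exp]
    have hlogn1 : Real.log ((n : ℝ) + 1) ≤ Real.log 2 + Real.log n := by
      rw [← Real.log_mul two_ne_zero hn0.ne']
      refine Real.log_le_log (by positivity) ?_
      have h : (1 : ℝ) ≤ (n : ℝ) := by exact_mod_cast hn3
      linarith
    have hlogn1' : (l : ℝ) * Real.log ((n : ℝ) + 1)
        ≤ (l : ℝ) * (Real.log 2 + Real.log n) :=
      mul_le_mul_of_nonneg_left hlogn1 hln0
    rw [Real.norm_eq_abs, abs_le]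
    have heq : (1 / n : ℝ) * Real.log (Pmult l p q n) - S
        = (Real.log (Pmult l p q n) - (n : ℝ) * S) / n := by
      field_simp
    rw [heq]
    simp only [hg, he1] at *
    have hll : (0 : ℝ) ≤ (l : ℝ) * (Real.log 2 + Real.log n) :=
      mul_nonneg hln0 (by linarith [Real.log_nonneg (one_le_two : (1:ℝ) ≤ 2)])
    constructor
    · rw [← neg_div, div_le_div_iff_of_pos_right hn0]
      linarith
    · rw [div_le_div_iff_of_pos_right hn0]
      linarith
  · -- tendsto g → 0
    have hinv : Tendsto (fun n : ℕ => Real.sqrt n / n) atTop (nhds 0) := by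
      have h1 : Tendsto (fun n : ℕ => ((n : ℝ)) ^ (-(1/2) : ℝ)) atTop (nhds 0) :=
        (tendsto_rpow_neg_atTop (by norm_num : (0:ℝ) < 1/2)).comp tendsto_natCast_atTop_atTop
      refine h1.congr' ?_
      filter_upwards [eventually_ge_atTop 1] with n hn
      have hn0 : (0 : ℝ) < n := by exact_mod_cast hn
      rw [show (-(1/2) : ℝ) = 1/2 - 1 by norm_num, Real.rpow_sub hn0, Real.rpow_one,
        ← Real.sqrt_eq_rpow]
    obtain ⟨C, hC⟩ : ∃ C : ℝ, C = (l : ℝ) * Real.log 2 + ((l : ℝ) + 1) * 2 := ⟨_, rfl⟩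
    obtain ⟨D, hD⟩ : ∃ D : ℝ, D = (l : ℝ) * 2 + ((l : ℝ) + 1) * 2 + 0.01 * K := ⟨_, rfl⟩
    have htend : Tendsto (fun n : ℕ => C / n + D * (Real.sqrt n / n)) atTop (nhds 0) := by
      have h1 := tendsto_const_div_atTop_nhds_zero_nat C
      have h2 := hinv.const_mul D
      simpa using h1.add h2
    refine squeeze_zero' ?_ ?_ htend
    · filter_upwards [eventually_ge_atTop 1] with n hn3
      have hn0 : (0 : ℝ) < n := by exact_mod_cast hn3
      have hs0 : 0 ≤ Real.sqrt (n : ℝ) := Real.sqrt_nonneg _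
      have hlogn0 : 0 ≤ Real.log n := Real.log_nonneg (by exact_mod_cast hn3)
      have hlog2 : 0 ≤ Real.log 2 := Real.log_nonneg one_le_two
      simp only [hg, he1]
      have hnum : 0 ≤ (l : ℝ) * (Real.log 2 + Real.log n)
          + (((l : ℝ) + 1) * (2 + Real.log n) + 0.01 * Real.sqrt n * K) := by
        have h1 : 0 ≤ (l : ℝ) * (Real.log 2 + Real.log n) :=
          mul_nonneg (Nat.cast_nonneg l) (by linarith)
        have h2 : 0 ≤ ((l : ℝ) + 1) * (2 + Real.log n) :=
          mul_nonneg (by positivity) (by linarith)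
        have h3 : 0 ≤ 0.01 * Real.sqrt n * K := mul_nonneg (by positivity) hK0
        linarith
      exact div_nonneg hnum hn0.le
    · filter_upwards [eventually_ge_atTop 1] with n hn3
      have hn0 : (0 : ℝ) < n := by exact_mod_cast hn3
      have hs0 : 0 ≤ Real.sqrt (n : ℝ) := Real.sqrt_nonneg _
      have hlogn0 : 0 ≤ Real.log n := Real.log_nonneg (by exact_mod_cast hn3)
      have hlog_sqrt : Real.log n ≤ 2 * Real.sqrt n := by
        have h1 : Real.log (Real.sqrt n) = Real.log n / 2 := Real.log_sqrt (Nat.cast_nonneg n)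
        have h2 : Real.log (Real.sqrt n) ≤ Real.sqrt n - 1 :=
          Real.log_le_sub_one_of_pos (Real.sqrt_pos.2 hn0)
        linarith
      have hlog2 : Real.log 2 ≤ Real.log 2 := le_rfl
      have hnum : (l : ℝ) * (Real.log 2 + Real.log n)
          + (((l : ℝ) + 1) * (2 + Real.log n) + 0.01 * Real.sqrt n * K)
          ≤ C + D * Real.sqrt n := by
        rw [hC, hD]
        have hln0 : (0 : ℝ) ≤ (l : ℝ) := Nat.cast_nonneg l
        have h1 : (l : ℝ) * Real.log n ≤ (l : ℝ) * (2 * Real.sqrt n) :=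
          mul_le_mul_of_nonneg_left hlog_sqrt hln0
        have h2 : ((l : ℝ) + 1) * Real.log n ≤ ((l : ℝ) + 1) * (2 * Real.sqrt n) :=
          mul_le_mul_of_nonneg_left hlog_sqrt (by positivity)
        nlinarith
      simp only [hg, he1]
      rw [show C / (n : ℝ) + D * (Real.sqrt n / n) = (C + D * Real.sqrt n) / n by ring]
      exact div_le_div_of_nonneg_right hnum hn0.le
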